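/- Let p be a pmf on 𝒳={1,…,K} with p(x)>0 for all x, let p(y|x) be a channel with p(y|x)>0 for all x,y, and let M be a positive real. Then lim_{α→1} (1/(α−1)) · log₂( M^{α−1} · Σ_y ( Σ_x p(x)·p(y|x)^{1/(2−α)} )^{2−α} ) = log₂ M + I(X;Y), where I(X;Y)=Σ_{x,y} p(x)p(y|x) log₂( p(y|x)/p(y) ) with p(y)=Σ_x p(x)p(y|x), and the limit is over α≠1 approaching 1. -/

import Mathlib

/-- As `α → 1`, the Hölder bound on the generalized capacity recovers
`log₂ M + I(X;Y)`. -/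
theorem stmt_7 (K : ℕ) (hK : 0 < K)
    (p : Fin K → ℝ) (hp : ∀ x, 0 < p x) (hpsum : ∑ x, p x = 1)
    (W : Fin K → Fin K → ℝ) (hW : ∀ x y, 0 < W x y) (hWsum : ∀ x, ∑ y, W x y = 1)
    (M : ℝ) (hM : 0 < M)
    (pY : Fin K → ℝ) (hpY : ∀ y, pY y = ∑ x, p x * W x y) :
    Filter.Tendsto (fun α : ℝ => (1/(α-1)) *
        Real.logb 2 (M ^ (α-1) * ∑ y, (∑ x, p x * (W x y) ^ (1/(2-α))) ^ (2-α)))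
      (nhdsWithin 1 {(1:ℝ)}ᶜ)
      (nhds (Real.logb 2 M + ∑ x, ∑ y, p x * W x y * Real.logb 2 (W x y / pY y))) := by
  have hne : Nonempty (Fin K) := Fin.pos_iff_nonempty.mp hK
  have hlog2 : Real.log 2 ≠ 0 := by
    have := Real.log_pos (by norm_num : (1:ℝ) < 2); linarith
  set S : ℝ → ℝ := fun α => ∑ y, (∑ x, p x * (W x y) ^ (1/(2-α))) ^ (2-α) with hSdef
  have hT0 : ∀ (α : ℝ) (y : Fin K), 0 < ∑ x, p x * (W x y) ^ (1/(2-α)) := by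
    intro α y
    exact Finset.sum_pos (fun x _ => mul_pos (hp x) (Real.rpow_pos_of_pos (hW x y) (1/(2-α))))
      Finset.univ_nonempty
  have hS0 : ∀ α, 0 < S α := fun α =>
    Finset.sum_pos (fun y _ => Real.rpow_pos_of_pos (hT0 α y) _) Finset.univ_nonempty
  have hpY0 : ∀ y, 0 < pY y := by
    intro y; rw [hpY]
    exact Finset.sum_pos (fun x _ => mul_pos (hp x) (hW x y)) Finset.univ_nonempty
  have hT1 : ∀ y : Fin K, (∑ x, p x * (W x y) ^ (1/(2-(1:ℝ)))) = pY y := by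
    intro y; rw [hpY]; norm_num
  have hS1 : S 1 = 1 := by
    rw [hSdef]; simp only
    have : ∀ y : Fin K, (∑ x, p x * (W x y) ^ (1/(2-(1:ℝ)))) ^ (2-(1:ℝ)) = ∑ x, p x * W x y := by
      intro y
      rw [show (2:ℝ) - 1 = 1 by norm_num]
      rw [Real.rpow_one]
      norm_num
    rw [Finset.sum_congr rfl (fun y _ => this y)]
    rw [Finset.sum_comm]
    simp_rw [← Finset.mul_sum, hWsum, mul_one]
    exact hpsum
  set D : ℝ := ∑ y, ((∑ x, p x * W x y * Real.log (W x y)) - pY y * Real.log (pY y)) with hDdef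
  have hDeriv : HasDerivAt S D 1 := by
    rw [hSdef, hDdef]
    apply HasDerivAt.fun_sum
    intro y _
    have hT : HasDerivAt (fun α : ℝ => ∑ x, p x * (W x y) ^ (1/(2-α)))
        (∑ x, p x * W x y * Real.log (W x y)) 1 := by
      apply HasDerivAt.fun_sum
      intro x _
      have hu : HasDerivAt (fun α : ℝ => 1/(2-α)) 1 1 := by
        have h2 : HasDerivAt (fun α : ℝ => 2 - α) (0 - 1) 1 :=
          (hasDerivAt_const 1 (2:ℝ)).sub (hasDerivAt_id 1)
        have := h2.inv (by norm_num)
        simp only [one_div]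
        refine this.congr_deriv ?_
        norm_num
      have hb : HasDerivAt (fun _ : ℝ => W x y) 0 1 := hasDerivAt_const 1 (W x y)
      have := (hb.rpow hu (hW x y)).const_mul (p x)
      refine this.congr_deriv ?_
      norm_num [mul_assoc]
    have hg : HasDerivAt (fun α : ℝ => 2 - α) (0 - 1) 1 :=
      (hasDerivAt_const 1 (2:ℝ)).sub (hasDerivAt_id 1)
    have := hT.rpow hg (hT0 1 y)
    refine this.congr_deriv ?_
    rw [hT1 y]
    norm_num
    ring
  have hG : HasDerivAt (fun α => Real.logb 2 (S α)) (D / Real.log 2) 1 := by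
    have hlog : HasDerivAt (fun α => Real.log (S α)) (D / S 1) 1 :=
      hDeriv.log (ne_of_gt (hS0 1))
    rw [hS1, div_one] at hlog
    have := hlog.div_const (Real.log 2)
    simpa [Real.logb] using this
  have hslope := hasDerivAt_iff_tendsto_slope.mp hG
  -- identify D / log 2 with the mutual information
  have hD2 : D / Real.log 2 = ∑ x, ∑ y, p x * W x y * Real.logb 2 (W x y / pY y) := by
    rw [Finset.sum_comm (s := Finset.univ) (t := Finset.univ)
      (f := fun x y => p x * W x y * Real.logb 2 (W x y / pY y))]
    rw [div_eq_iff hlog2, Finset.sum_mul]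
    apply Finset.sum_congr rfl
    intro y _
    rw [Finset.sum_mul]
    have : ∀ x : Fin K, p x * W x y * Real.logb 2 (W x y / pY y) * Real.log 2
        = p x * W x y * Real.log (W x y) - p x * W x y * Real.log (pY y) := by
      intro x
      rw [Real.logb, Real.log_div (ne_of_gt (hW x y)) (ne_of_gt (hpY0 y))]
      field_simp
    rw [Finset.sum_congr rfl (fun x _ => this x), Finset.sum_sub_distrib]
    congr 1
    rw [← Finset.sum_mul, ← hpY y]
  rw [hDdef] at hslope
  -- now rewrite the target function on the punctured neighborhood
  have key : Filter.Tendsto (fun α : ℝ => Real.logb 2 M + slope (fun α => Real.logb 2 (S α)) 1 α)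
      (nhdsWithin 1 {(1:ℝ)}ᶜ)
      (nhds (Real.logb 2 M + ∑ x, ∑ y, p x * W x y * Real.logb 2 (W x y / pY y))) := by
    rw [← hD2]
    exact (tendsto_const_nhds.add hslope)
  apply key.congr'
  filter_upwards [self_mem_nhdsWithin] with α hα
  have hα1 : α - 1 ≠ 0 := sub_ne_zero.mpr hα
  rw [slope_def_field]
  rw [Real.logb_mul (ne_of_gt (Real.rpow_pos_of_pos hM _)) (ne_of_gt (hS0 α))]
  have hlogM : Real.logb 2 (M ^ (α-1)) = (α-1) * Real.logb 2 M := by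
    rw [Real.logb, Real.log_rpow hM, Real.logb, mul_div_assoc]
  rw [hlogM, hS1, Real.logb_one]
  field_simp
  ring
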